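/- Distinguishability bound for the subsampling mechanism (Section 3.1). Fix n ≥ 1 and 1 ≤ k ≤ n. Define the randomized function f on {0,1}^n by: draw a uniformly random k-element subset A of {1,…,n} and output Σ_{i∈A} b_i. Then for every i and every pair b, b' ∈ {0,1}^n that agree on all coordinates j ≠ i, the total variation distance satisfies Δ(f(b), f(b')) ≤ k/n. -/

import Mathlib

open MeasureTheory
open scoped ENNReal

noncomputable section

attribute [local instance] Classical.propDecidable

/-- Expectation of a real-valued function under a `PMF`. -/
def PMF.expect {α : Type*} [MeasurableSpace α] (p : PMF α) (f : α → ℝ) : ℝ :=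
  ∫ x, f x ∂p.toMeasure

/-- Total variation (statistical) distance between two distributions:
`Δ(p,q) = sup_S |p(S) - q(S)|`. -/
def tvDist {α : Type*} (p q : PMF α) : ℝ :=
  ⨆ S : Set α, |(p.toOuterMeasure S).toReal - (q.toOuterMeasure S).toReal|

/-- A mechanism on `n` players: a randomized function producing an integer output
(an estimate of the sum of the data bits) together with payments to the `n` players. -/
structure Mech (n : ℕ) where
  run : (Fin n → Bool) → (Fin n → ℝ) → PMF (ℤ × (Fin n → ℝ))

namespace Mech

variable {n : ℕ}

/-- The output part `M_out`. -/
def out (M : Mech n) (b : Fin n → Bool) (v : Fin n → ℝ) : PMF ℤ :=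
  (M.run b v).map Prod.fst

/-- The payment part `M_pay`. -/
def payPMF (M : Mech n) (b : Fin n → Bool) (v : Fin n → ℝ) : PMF (Fin n → ℝ) :=
  (M.run b v).map Prod.snd

/-- `Pay_i(b,v)`: the expected payment to player `i`. -/
def pay (M : Mech n) (b : Fin n → Bool) (v : Fin n → ℝ) (i : Fin n) : ℝ :=
  (M.payPMF b v).expect (fun p => p i)

/-- `M_{-i}`: the output together with the payments to all players other than `i`. -/
def minus (M : Mech n) (i : Fin n) (b : Fin n → Bool) (v : Fin n → ℝ) :
    PMF (ℤ × ({j : Fin n // j ≠ i} → ℝ)) :=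
  (M.run b v).map (fun sp => (sp.1, fun j => sp.2 j.1))

end Mech

/-- The type of privacy loss functions `λ_i(b, v, v'_i, s, p_{-i})` for player `i`. -/
abbrev LossFn (n : ℕ) (i : Fin n) : Type :=
  (Fin n → Bool) → (Fin n → ℝ) → ℝ → ℤ → ({j : Fin n // j ≠ i} → ℝ) → ℝ

/-- `Loss_i(b, v, v'_i)`: the expected privacy loss of player `i` with true types `(b,v)`
and declaration `v'_i`. -/
def lossOf {n : ℕ} (M : Mech n) {i : Fin n} (lam : LossFn n i)
    (b : Fin n → Bool) (v : Fin n → ℝ) (v'i : ℝ) : ℝ :=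
  (M.run b (Function.update v i v'i)).expect
    (fun sp => lam b v v'i sp.1 (fun j => sp.2 j.1))

/-- `i`-neighbors: inputs agreeing in all coordinates `j ≠ i`. -/
def iNeighbor {n : ℕ} (i : Fin n) (x y : (Fin n → Bool) × (Fin n → ℝ)) : Prop :=
  ∀ j, j ≠ i → x.1 j = y.1 j ∧ x.2 j = y.2 j

/-- Neighbors: `i`-neighbors for some `i`. -/
def Neighbor {n : ℕ} (x y : (Fin n → Bool) × (Fin n → ℝ)) : Prop :=
  ∃ i, iNeighbor i x y

/-- Monotonically related player types. -/
def monRelated (t t' : Bool × ℝ) : Prop :=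
  (t.1 = false ∧ t'.1 = true ∧ t.2 ≤ t'.2) ∨ (t.1 = true ∧ t'.1 = false ∧ t'.2 ≤ t.2)

/-- Monotonic `i`-neighbors. -/
def monINeighbor {n : ℕ} (i : Fin n) (x y : (Fin n → Bool) × (Fin n → ℝ)) : Prop :=
  iNeighbor i x y ∧ monRelated (x.1 i, x.2 i) (y.1 i, y.2 i)

/-- `(b,v)` is `δ`-distinguishable for player `i` with respect to `f`. -/
def distinguishable {n : ℕ} {α : Type*} (δ : ℝ)
    (f : (Fin n → Bool) → (Fin n → ℝ) → PMF α) (i : Fin n)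
    (b : Fin n → Bool) (v : Fin n → ℝ) : Prop :=
  ∃ y : (Fin n → Bool) × (Fin n → ℝ), iNeighbor i (b, v) y ∧ δ ≤ tvDist (f b v) (f y.1 y.2)

/-- `(b,v)` is `δ`-monotonically distinguishable for player `i` with respect to `f`. -/
def monDistinguishable {n : ℕ} {α : Type*} (δ : ℝ)
    (f : (Fin n → Bool) → (Fin n → ℝ) → PMF α) (i : Fin n)
    (b : Fin n → Bool) (v : Fin n → ℝ) : Prop :=
  ∃ y : (Fin n → Bool) × (Fin n → ℝ), monINeighbor i (b, v) y ∧ δ ≤ tvDist (f b v) (f y.1 y.2)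

/-- `λ_i` respects indifference. -/
def respectsIndifference {n : ℕ} (M : Mech n) {i : Fin n} (lam : LossFn n i) : Prop :=
  ∀ b v, v i = 0 → ∀ v' v'', lossOf M lam b v v' = lossOf M lam b v v''

/-- `λ_i` is increasing for `δ`-distinguishability. -/
def increasingFor {n : ℕ} (M : Mech n) {i : Fin n} (lam : LossFn n i) (δ : ℝ) : Prop :=
  ∃ T : ℝ → (Fin n → Bool) → ({j : Fin n // j ≠ i} → ℝ) → ℝ,
    ∀ ℓ, 0 < ℓ → ∀ (b : Fin n → Bool) (v : Fin n → ℝ),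
      T ℓ b (fun j => v j.1) ≤ v i →
      distinguishable δ M.out i b v →
      ℓ < lossOf M lam b v (v i)

/-- `λ_i` is increasing for `δ`-monotonic distinguishability. -/
def increasingForMon {n : ℕ} (M : Mech n) {i : Fin n} (lam : LossFn n i) (δ : ℝ) : Prop :=
  ∃ T : ℝ → (Fin n → Bool) → ({j : Fin n // j ≠ i} → ℝ) → ℝ,
    ∀ ℓ, 0 < ℓ → ∀ (b : Fin n → Bool) (v : Fin n → ℝ),
      T ℓ b (fun j => v j.1) ≤ v i →
      monDistinguishable δ M.out i b v →
      ℓ < lossOf M lam b v (v i)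

/-- `M` is individually rational. -/
def indivRational {n : ℕ} (M : Mech n) (lam : ∀ i : Fin n, LossFn n i) : Prop :=
  ∀ b v i, lossOf M (lam i) b v (v i) ≤ M.pay b v i

/-- `M` is truthful for input `(b,v)` and player `i`. -/
def truthfulAt {n : ℕ} (M : Mech n) {i : Fin n} (lam : LossFn n i)
    (b : Fin n → Bool) (v : Fin n → ℝ) : Prop :=
  ∀ v'i : ℝ,
    M.pay b (Function.update v i v'i) i - lossOf M lam b v v'i ≤
      M.pay b v i - lossOf M lam b v (v i)

/-- The average `b̄` of the data bits. -/
def bbar {n : ℕ} (b : Fin n → Bool) : ℝ := (∑ i, if b i then (1 : ℝ) else 0) / n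

/-- `M` is `([a, a'], β)`-accurate on input `(b,v)`. -/
def accurate {n : ℕ} (M : Mech n) (a a' β : ℝ) (b : Fin n → Bool) (v : Fin n → ℝ) : Prop :=
  ((M.out b v).toOuterMeasure
      {s : ℤ | ¬((bbar b - a) * n < (s : ℝ) ∧ (s : ℝ) < (bbar b + a') * n)}).toReal ≤ β

/-- `G` is the symmetric geometric distribution `Geom(ε)` on `ℤ`, with
`Pr[X = k] = (1-e^{-ε})/(1+e^{-ε}) · e^{-ε|k|}`. -/
def isGeom (ε : ℝ) (G : PMF ℤ) : Prop :=
  ∀ k : ℤ, G k =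
    ENNReal.ofReal ((1 - Real.exp (-ε)) / (1 + Real.exp (-ε)) * Real.exp (-ε * |(k : ℝ)|))

/-- The monotonic-valuations mechanism `M_{B,ε}` (Algorithm 1): data bits of players with
`2εv_i > B/n` are treated as 0, the output is the resulting sum plus `Geom(ε)` noise, and
each player with `2εv_i ≤ B/n` is paid `B/n` (others are paid nothing). -/
def monMech (n : ℕ) (B ε : ℝ) (G : PMF ℤ) : Mech n where
  run b v := G.map (fun x =>
    ((∑ i, if b i = true ∧ 2 * ε * v i ≤ B / n then (1 : ℤ) else 0) + x,
      fun i => if 2 * ε * v i ≤ B / n then B / n else 0))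

/-- The modified mechanism `M'` of Theorem 4.3: identical to `M_{B,ε}` except that all
players with data bit 0 are paid `B/n`, even those with large privacy valuations. -/
def monMech' (n : ℕ) (B ε : ℝ) (G : PMF ℤ) : Mech n where
  run b v := G.map (fun x =>
    ((∑ i, if b i = true ∧ 2 * ε * v i ≤ B / n then (1 : ℤ) else 0) + x,
      fun i => if 2 * ε * v i ≤ B / n ∨ b i = false then B / n else 0))

/-- The log-ratio of point probabilities of `M_{-i}` between `(b,v)` and the input where
player `i`'s type is replaced by `(b''_i, v''_i)`. -/
def logRatio {n : ℕ} (M : Mech n) (i : Fin n) (b : Fin n → Bool) (v : Fin n → ℝ)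
    (b''i : Bool) (v''i : ℝ) (s : ℤ) (p : {j : Fin n // j ≠ i} → ℝ) : ℝ :=
  Real.log ((M.minus i b v (s, p)).toReal /
    (M.minus i (Function.update b i b''i) (Function.update v i v''i) (s, p)).toReal)

/-- `λ_i` is bounded by differential privacy for monotonic valuations. -/
def boundedByDPMon {n : ℕ} (M : Mech n) {i : Fin n} (lam : LossFn n i) : Prop :=
  ∀ b v v'i s p,
    |lam b v v'i s p| ≤
      v i * ⨆ t : {t : Bool × ℝ // monRelated (b i, v i) t},
        logRatio M i b v t.1.1 t.1.2 s p

/-- `λ_i` respects identical output distributions. -/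
def respectsIdentical {n : ℕ} (M : Mech n) {i : Fin n} (lam : LossFn n i) : Prop :=
  ∀ b v v'i, M.minus i b v = M.minus i b (Function.update v i v'i) →
    ∀ s p, lam b v v'i s p = lam b v (v i) s p

/-- `λ_i` is growing with statistical distance for monotonic neighbors. -/
def growingMon {n : ℕ} (M : Mech n) {i : Fin n} (lam : LossFn n i) : Prop :=
  ∀ b v y, monINeighbor i (b, v) y →
    v i * tvDist (M.out b v) (M.out y.1 y.2) ≤ lossOf M lam b v (v i)

lemma count_aux (n k : ℕ) (hk1 : 1 ≤ k) (i : Fin n) :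
    (Finset.univ.filter (fun A : Finset (Fin n) => i ∈ A ∧ A.card = k)).card
      = (n-1).choose (k-1) := by
  have hcard : (Finset.univ.filter (fun A : Finset (Fin n) => i ∈ A ∧ A.card = k)).card
      = (Finset.powersetCard (k-1) (Finset.univ.erase i)).card := by
    refine Finset.card_nbij' (fun A => A.erase i) (fun B => insert i B) ?_ ?_ ?_ ?_
    · intro A hA
      simp only [Finset.mem_coe, Finset.mem_filter, Finset.mem_univ, true_and] at hA
      rw [Finset.mem_coe, Finset.mem_powersetCard]
      exact ⟨Finset.erase_subset_erase i (Finset.subset_univ A),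
        by rw [Finset.card_erase_of_mem hA.1, hA.2]⟩
    · intro B hB
      rw [Finset.mem_coe, Finset.mem_powersetCard] at hB
      have hiB : i ∉ B := fun h => (Finset.mem_erase.mp (hB.1 h)).1 rfl
      simp only [Finset.mem_coe, Finset.mem_filter, Finset.mem_univ, true_and]
      refine ⟨Finset.mem_insert_self i B, ?_⟩
      rw [Finset.card_insert_of_notMem hiB, hB.2, Nat.sub_add_cancel hk1]
    · intro A hA
      simp only [Finset.mem_coe, Finset.mem_filter, Finset.mem_univ, true_and] at hA
      exact Finset.insert_erase hA.1
    · intro B hB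
      rw [Finset.mem_coe, Finset.mem_powersetCard] at hB
      exact Finset.erase_insert (fun h => (Finset.mem_erase.mp (hB.1 h)).1 rfl)
  rw [hcard, Finset.card_powersetCard, Finset.card_erase_of_mem (Finset.mem_univ i),
    Finset.card_univ, Fintype.card_fin]


/-- **Distinguishability bound for the subsampling mechanism (Section 3.1).** -/
theorem subsampling_distinguishability (n k : ℕ) (hk1 : 1 ≤ k) (hkn : k ≤ n)
    (U : PMF (Finset (Fin n)))
    (hU : ∀ A : Finset (Fin n),
      U A = if A.card = k then ((n.choose k : ℝ≥0∞))⁻¹ else 0)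
    (i : Fin n) (b b' : Fin n → Bool) (hag : ∀ j, j ≠ i → b j = b' j) :
    tvDist (U.map (fun A => ∑ j ∈ A, if b j then (1 : ℤ) else 0))
        (U.map (fun A => ∑ j ∈ A, if b' j then (1 : ℤ) else 0)) ≤ (k : ℝ) / n := by
  have hn : 1 ≤ n := hk1.trans hkn
  set f : Finset (Fin n) → ℤ := fun A => ∑ j ∈ A, if b j then (1 : ℤ) else 0 with hf
  set g : Finset (Fin n) → ℤ := fun A => ∑ j ∈ A, if b' j then (1 : ℤ) else 0 with hg
  set T : Set (Finset (Fin n)) := {A | i ∈ A} with hTdef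
  -- f = g off T
  have hfg : ∀ A : Finset (Fin n), A ∉ T → f A = g A := by
    intro A hA
    exact Finset.sum_congr rfl fun j hj => by
      rw [hag j (fun h => hA (show i ∈ A from h ▸ hj))]
  -- finiteness
  have hfin : ∀ (p : PMF (Finset (Fin n))) (s : Set (Finset (Fin n))),
      p.toOuterMeasure s ≠ ⊤ := by
    intro p s
    refine ne_top_of_le_ne_top ENNReal.one_ne_top ?_
    rw [PMF.toOuterMeasure_apply, ← p.tsum_coe]
    exact ENNReal.tsum_le_tsum fun x => Set.indicator_le_self _ _ x
  -- measure of T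
  have hT : (U.toOuterMeasure T).toReal = (k : ℝ) / n := by
    rw [PMF.toOuterMeasure_apply, tsum_fintype]
    have : ∀ A : Finset (Fin n), T.indicator (⇑U) A
        = if i ∈ A ∧ A.card = k then ((n.choose k : ℝ≥0∞))⁻¹ else 0 := by
      intro A
      rw [Set.indicator_apply, hU]
      by_cases h1 : i ∈ A <;> by_cases h2 : A.card = k <;>
        simp [hTdef, h1, h2]
    rw [Finset.sum_congr rfl (fun A _ => this A), Finset.sum_ite, Finset.sum_const,
      Finset.sum_const, smul_zero, add_zero, count_aux n k hk1 i, nsmul_eq_mul]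
    have hch : (n.choose k : ℝ) ≠ 0 := Nat.cast_ne_zero.mpr (Nat.choose_pos hkn).ne'
    rw [ENNReal.toReal_mul, ENNReal.toReal_inv]
    simp only [ENNReal.toReal_natCast]
    rw [mul_inv_eq_iff_eq_mul₀ hch, div_mul_eq_mul_div, eq_div_iff (by positivity : (n:ℝ) ≠ 0)]
    have hnat := Nat.add_one_mul_choose_eq (n-1) (k-1)
    have h1 : (n-1).succ = n := Nat.succ_pred_eq_of_pos (n := n) (by omega)
    have h2 : (k-1).succ = k := Nat.succ_pred_eq_of_pos (n := k) (by omega)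
    rw [Nat.succ_eq_add_one] at h1 h2
    rw [h1, h2] at hnat
    have : ((n-1).choose (k-1) : ℝ) * n = (k : ℝ) * n.choose k := by
      rw [mul_comm ((n-1).choose (k-1) : ℝ), mul_comm (k:ℝ)]
      exact_mod_cast congrArg (Nat.cast : ℕ → ℝ) hnat
    linarith
  -- per-set bound
  have key : ∀ (u v : Finset (Fin n) → ℤ), (∀ A, A ∉ T → u A = v A) → ∀ S : Set ℤ,
      ((U.map u).toOuterMeasure S).toReal - ((U.map v).toOuterMeasure S).toReal
        ≤ (k : ℝ) / n := by
    intro u v huv S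
    rw [PMF.toOuterMeasure_map_apply, PMF.toOuterMeasure_map_apply]
    have hsub : u ⁻¹' S ⊆ v ⁻¹' S ∪ T := by
      intro A hA
      by_cases hAT : A ∈ T
      · exact Or.inr hAT
      · exact Or.inl (by simpa [Set.mem_preimage, ← huv A hAT] using hA)
    have h1 : U.toOuterMeasure (u ⁻¹' S)
        ≤ U.toOuterMeasure (v ⁻¹' S) + U.toOuterMeasure T :=
      le_trans (U.toOuterMeasure.mono hsub) (measure_union_le _ _)
    have h2 := ENNReal.toReal_mono (by
      exact ENNReal.add_ne_top.mpr ⟨hfin U _, hfin U _⟩) h1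
    rw [ENNReal.toReal_add (hfin U _) (hfin U _), hT] at h2
    linarith
  refine ciSup_le fun S => ?_
  rw [abs_sub_le_iff]
  exact ⟨key f g hfg S, key g f (fun A hA => (hfg A hA).symm) S⟩
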